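/- Let Ω ⊆ ℝ^d be open and bounded, α, μ : ℝ^d \ {0} → [0,∞) even measurable functions with ∫_{ℝ^d} min{1, |h|²} α(h) μ(h) dh < ∞. Let F : ℝ^d → ℝ^d be a C¹ vector field with compact support, and define the nonlocal vector field f_α(x,y) = α(x-y) ∫₀¹ F(x + t(y-x)) · (y-x) dt for x ≠ y, f_α(x,x) = 0. Then for every x ∈ Ω, the principal value integral pv. ∫_{ℝ^d} f_α(x,y) μ(y-x) dy exists and is finite. -/

import Mathlib

open MeasureTheory Filter

/-- Existence of the principal value integral of the nonlocal vector field generated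
by a `C¹` vector field `F` with compact support. -/
theorem pv_integral_exists_generated_field
    {d : ℕ} (Ω : Set (EuclideanSpace ℝ (Fin d))) (hΩopen : IsOpen Ω)
    (hΩbdd : Bornology.IsBounded Ω)
    (α μ : EuclideanSpace ℝ (Fin d) → ℝ)
    (hαnonneg : ∀ h, 0 ≤ α h) (hμnonneg : ∀ h, 0 ≤ μ h)
    (hαeven : ∀ h, α (-h) = α h) (hμeven : ∀ h, μ (-h) = μ h)
    (hαmeas : Measurable α) (hμmeas : Measurable μ)
    (hlevy : ∫⁻ h, ENNReal.ofReal (min 1 (‖h‖ ^ 2) * α h * μ h) < ⊤)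
    (F : EuclideanSpace ℝ (Fin d) → EuclideanSpace ℝ (Fin d))
    (hF : ContDiff ℝ 1 F) (hFsupp : HasCompactSupport F)
    (fα : EuclideanSpace ℝ (Fin d) → EuclideanSpace ℝ (Fin d) → ℝ)
    (hfα : ∀ x y, x ≠ y →
      fα x y = α (x - y) * ∫ t in (0:ℝ)..1, inner ℝ (F (x + t • (y - x))) (y - x))
    (hfαdiag : ∀ x, fα x x = 0) :
    ∀ x ∈ Ω, ∃ L : ℝ,
      Tendsto (fun ε : ℝ => ∫ y in {y | ε < ‖y - x‖}, fα x y * μ (y - x))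
        (nhdsWithin 0 (Set.Ioi 0)) (nhds L) := by
  classical
  intro x hx
  -- bound on F
  obtain ⟨M₀, hM₀⟩ := hF.continuous.bounded_above_of_compact_support hFsupp
  set M : ℝ := max M₀ 0 with hMdef
  have hM : ∀ z, ‖F z‖ ≤ M := fun z => (hM₀ z).trans (le_max_left _ _)
  have hMnonneg : (0:ℝ) ≤ M := le_max_right _ _
  -- Lipschitz constant of F
  obtain ⟨K₀, hK₀⟩ :=
    (hF.continuous_fderiv one_ne_zero).bounded_above_of_compact_support (hFsupp.fderiv (𝕜 := ℝ))
  set K : NNReal := ⟨max K₀ 0, le_max_right _ _⟩ with hKdef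
  have hLip : LipschitzWith K F := by
    refine lipschitzWith_of_nnnorm_fderiv_le (𝕜 := ℝ)
      (G := EuclideanSpace ℝ (Fin d)) (hF.differentiable one_ne_zero) (fun z => ?_)
    have : ‖fderiv ℝ F z‖ ≤ (K : ℝ) := (hK₀ z).trans (le_max_left _ _)
    exact_mod_cast this
  have hLipR : ∀ a b : (EuclideanSpace ℝ (Fin d)), ‖F a - F b‖ ≤ (K : ℝ) * ‖a - b‖ := by
    intro a b
    simpa [dist_eq_norm] using hLip.dist_le_mul a b
  -- support radius
  obtain ⟨R₀, hR₀⟩ := hFsupp.isBounded.subset_closedBall (0 : (EuclideanSpace ℝ (Fin d)))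
  set R : ℝ := max R₀ 0 with hRdef
  have hRnonneg : (0:ℝ) ≤ R := le_max_right _ _
  have hR : ∀ z : (EuclideanSpace ℝ (Fin d)), F z ≠ 0 → ‖z‖ ≤ R := by
    intro z hz
    have hz' : z ∈ tsupport F := subset_tsupport F hz
    have := hR₀ hz'
    rw [Metric.mem_closedBall, dist_zero_right] at this
    exact this.trans (le_max_left _ _)
  -- the parametric integral
  set φ : (EuclideanSpace ℝ (Fin d)) → ℝ := fun h => ∫ t in (0:ℝ)..1, inner ℝ (F (x + t • h)) h with hφdef
  have hφcont : Continuous φ := by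
    apply intervalIntegral.continuous_parametric_intervalIntegral_of_continuous'
      (μ := volume) (f := fun (h : (EuclideanSpace ℝ (Fin d))) (t : ℝ) => (inner ℝ (F (x + t • h)) h : ℝ))
    exact (hF.continuous.comp
      (continuous_const.add (continuous_snd.smul continuous_fst))).inner continuous_fst
  have hφ0 : φ 0 = 0 := by
    simp [hφdef]
  set Cb : ℝ := M * (R + ‖x‖) with hCbdef
  have hRx : (0:ℝ) ≤ R + ‖x‖ := add_nonneg hRnonneg (norm_nonneg x)
  have hCbnonneg : (0:ℝ) ≤ Cb := mul_nonneg hMnonneg hRx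
  -- uniform bound on φ using compact support
  have hφle : ∀ h : (EuclideanSpace ℝ (Fin d)), |φ h| ≤ Cb := by
    intro h
    rcases eq_or_ne h 0 with rfl | hne
    · rw [hφ0]; simpa using hCbnonneg
    · have hnorm : (0:ℝ) < ‖h‖ := norm_pos_iff.2 hne
      set c : ℝ := (R + ‖x‖) / ‖h‖ with hcdef
      have hc : (0:ℝ) ≤ c := div_nonneg hRx (norm_nonneg _)
      have h1 : φ h = ∫ t in Set.Ioc (0:ℝ) 1, inner ℝ (F (x + t • h)) h := by
        rw [hφdef]
        exact intervalIntegral.integral_of_le zero_le_one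
      have key : ∀ t ∈ Set.Ioc (0:ℝ) 1,
          ‖(inner ℝ (F (x + t • h)) h : ℝ)‖ ≤
            Set.indicator (Set.Iic c) (fun _ => M * ‖h‖) t := by
        intro t ht
        by_cases hFz : F (x + t • h) = 0
        · rw [hFz]
          simp only [inner_zero_left, norm_zero]
          exact Set.indicator_nonneg
            (fun _ _ => mul_nonneg hMnonneg (norm_nonneg _)) t
        · have hz : ‖x + t • h‖ ≤ R := hR _ hFz
          have htc : t ∈ Set.Iic c := by
            have h2 : ‖t • h‖ ≤ R + ‖x‖ := by
              have : t • h = (x + t • h) - x := by abel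
              rw [this]
              exact (norm_sub_le _ _).trans (add_le_add_left hz _)
            have h3 : t * ‖h‖ ≤ R + ‖x‖ := by
              rw [norm_smul, Real.norm_eq_abs, abs_of_pos ht.1] at h2
              exact h2
            exact Set.mem_Iic.2 ((le_div_iff₀ hnorm).2 h3)
          rw [Set.indicator_of_mem htc]
          calc ‖(inner ℝ (F (x + t • h)) h : ℝ)‖
              ≤ ‖F (x + t • h)‖ * ‖h‖ := norm_inner_le_norm _ _
            _ ≤ M * ‖h‖ := mul_le_mul_of_nonneg_right (hM _) (norm_nonneg _)
      have hIndInt : IntegrableOn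
          (Set.indicator (Set.Iic c) (fun _ => M * ‖h‖)) (Set.Ioc (0:ℝ) 1) := by
        apply Integrable.indicator _ measurableSet_Iic
        exact integrableOn_const measure_Ioc_lt_top.ne
      have h4 : ‖∫ t in Set.Ioc (0:ℝ) 1, (inner ℝ (F (x + t • h)) h : ℝ)‖ ≤
          ∫ t in Set.Ioc (0:ℝ) 1, Set.indicator (Set.Iic c) (fun _ => M * ‖h‖) t := by
        apply norm_integral_le_of_norm_le hIndInt
        exact (ae_restrict_iff' measurableSet_Ioc).2 (Eventually.of_forall key)
      have h5 : ∫ t in Set.Ioc (0:ℝ) 1, Set.indicator (Set.Iic c) (fun _ => M * ‖h‖) t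
          ≤ c * (M * ‖h‖) := by
        rw [setIntegral_indicator measurableSet_Iic, setIntegral_const]
        have hsub : Set.Ioc (0:ℝ) 1 ∩ Set.Iic c ⊆ Set.Ioc 0 c := by
          rintro t ⟨⟨ht0, _⟩, htc⟩
          exact ⟨ht0, htc⟩
        have hvol : (volume (Set.Ioc (0:ℝ) 1 ∩ Set.Iic c)).toReal ≤ c := by
          apply ENNReal.toReal_le_of_le_ofReal hc
          calc volume (Set.Ioc (0:ℝ) 1 ∩ Set.Iic c) ≤ volume (Set.Ioc (0:ℝ) c) :=
              measure_mono hsub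
            _ = ENNReal.ofReal c := by rw [Real.volume_Ioc, sub_zero]
        calc (volume (Set.Ioc (0:ℝ) 1 ∩ Set.Iic c)).toReal • (M * ‖h‖)
            = (volume (Set.Ioc (0:ℝ) 1 ∩ Set.Iic c)).toReal * (M * ‖h‖) := by
              rw [smul_eq_mul]
          _ ≤ c * (M * ‖h‖) :=
              mul_le_mul_of_nonneg_right hvol (mul_nonneg hMnonneg (norm_nonneg _))
      have h6 : c * (M * ‖h‖) = Cb := by
        rw [hcdef, hCbdef]
        field_simp
      rw [← Real.norm_eq_abs, h1]
      exact h4.trans (h5.trans_eq h6)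
  -- symmetrized bound for small h
  have hsym : ∀ h : (EuclideanSpace ℝ (Fin d)), ‖h‖ ≤ 1 → |φ h + φ (-h)| ≤ 2 * K * ‖h‖ ^ 2 := by
    intro h hh
    have hInt1 : IntervalIntegrable (fun t : ℝ => (inner ℝ (F (x + t • h)) h : ℝ))
        volume 0 1 := by
      apply Continuous.intervalIntegrable
      exact (hF.continuous.comp
        (continuous_const.add (continuous_id.smul continuous_const))).inner continuous_const
    have hInt2 : IntervalIntegrable (fun t : ℝ => (inner ℝ (F (x + t • (-h))) h : ℝ))
        volume 0 1 := by
      apply Continuous.intervalIntegrable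
      exact (hF.continuous.comp
        (continuous_const.add (continuous_id.smul continuous_const))).inner continuous_const
    have hφneg : φ (-h) = - ∫ t in (0:ℝ)..1, (inner ℝ (F (x + t • (-h))) h : ℝ) := by
      have e0 : φ (-h) = ∫ t in (0:ℝ)..1, (inner ℝ (F (x + t • (-h))) (-h) : ℝ) := rfl
      rw [e0]
      simp only [inner_neg_right]
      exact intervalIntegral.integral_neg
    have hcomb : φ h + φ (-h) =
        ∫ t in (0:ℝ)..1, (inner ℝ (F (x + t • h) - F (x + t • (-h))) h : ℝ) := by
      have e0 : φ h = ∫ t in (0:ℝ)..1, (inner ℝ (F (x + t • h)) h : ℝ) := rfl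
      rw [e0, hφneg, ← sub_eq_add_neg, ← intervalIntegral.integral_sub hInt1 hInt2]
      simp only [inner_sub_left]
    rw [hcomb]
    have := intervalIntegral.norm_integral_le_of_norm_le_const
      (C := 2 * K * ‖h‖ ^ 2)
      (f := fun t : ℝ => (inner ℝ (F (x + t • h) - F (x + t • (-h))) h : ℝ))
      (a := 0) (b := 1) ?_
    · rw [Real.norm_eq_abs] at this
      simpa using this
    · intro t ht
      rw [Set.uIoc_of_le zero_le_one] at ht
      have ht1 : |t| ≤ 1 := by
        rw [abs_of_pos ht.1]; exact ht.2
      calc ‖(inner ℝ (F (x + t • h) - F (x + t • (-h))) h : ℝ)‖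
          ≤ ‖F (x + t • h) - F (x + t • (-h))‖ * ‖h‖ := norm_inner_le_norm _ _
        _ ≤ ((K : ℝ) * ‖(x + t • h) - (x + t • (-h))‖) * ‖h‖ :=
            mul_le_mul_of_nonneg_right (hLipR _ _) (norm_nonneg _)
        _ = (K : ℝ) * ‖t • h + t • h‖ * ‖h‖ := by
            congr 2
            congr 1
            abel_nf
            simp [two_smul]
        _ ≤ (K : ℝ) * (2 * ‖h‖) * ‖h‖ := by
            apply mul_le_mul_of_nonneg_right _ (norm_nonneg _)
            apply mul_le_mul_of_nonneg_left _ (K.coe_nonneg)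
            calc ‖t • h + t • h‖ ≤ ‖t • h‖ + ‖t • h‖ := norm_add_le _ _
              _ = 2 * (|t| * ‖h‖) := by rw [norm_smul, Real.norm_eq_abs]; ring
              _ ≤ 2 * (1 * ‖h‖) := by
                  apply mul_le_mul_of_nonneg_left _ (by norm_num)
                  exact mul_le_mul_of_nonneg_right ht1 (norm_nonneg _)
              _ = 2 * ‖h‖ := by ring
        _ = 2 * K * ‖h‖ ^ 2 := by ring
  -- the key functions
  set g : (EuclideanSpace ℝ (Fin d)) → ℝ := fun h => α h * φ h * μ h with hgdef
  set G : (EuclideanSpace ℝ (Fin d)) → ℝ := fun h => g h + g (-h) with hGdef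
  set W : (EuclideanSpace ℝ (Fin d)) → ℝ := fun h => min 1 (‖h‖ ^ 2) * α h * μ h with hWdef
  set C : ℝ := max (2 * K) (2 * Cb) with hCdef
  have hCnonneg : (0:ℝ) ≤ C :=
    le_trans (by positivity) (le_max_right (2 * (K:ℝ)) (2 * Cb))
  have hg_eq : ∀ h : (EuclideanSpace ℝ (Fin d)), fα x (x + h) * μ ((x + h) - x) = g h := by
    intro h
    rcases eq_or_ne h 0 with rfl | hne
    · simp [hgdef, hfαdiag, hφ0]
    · have hxy : x ≠ x + h := by
        intro hcon
        exact hne (by simpa using hcon.symm)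
      rw [hfα x (x + h) hxy]
      have e1 : x - (x + h) = -h := by abel
      have e2 : (x + h) - x = h := by abel
      rw [e1, e2, hαeven]
  have hGbound : ∀ h : (EuclideanSpace ℝ (Fin d)), |G h| ≤ C * W h := by
    intro h
    have hGh : G h = α h * μ h * (φ h + φ (-h)) := by
      rw [hGdef]
      simp only [hgdef, neg_neg, hαeven, hμeven]
      ring
    have hαμ : (0:ℝ) ≤ α h * μ h := mul_nonneg (hαnonneg h) (hμnonneg h)
    have hkey : |φ h + φ (-h)| ≤ C * min 1 (‖h‖ ^ 2) := by
      rcases le_or_gt ‖h‖ 1 with hh | hh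
      · have hmin : min 1 (‖h‖ ^ 2) = ‖h‖ ^ 2 := by
          apply min_eq_right
          calc ‖h‖ ^ 2 ≤ 1 ^ 2 := by
                apply pow_le_pow_left₀ (norm_nonneg _) hh
            _ = 1 := one_pow 2
        rw [hmin]
        calc |φ h + φ (-h)| ≤ 2 * K * ‖h‖ ^ 2 := hsym h hh
          _ ≤ C * ‖h‖ ^ 2 :=
            mul_le_mul_of_nonneg_right (le_max_left _ _) (sq_nonneg _)
      · have hmin : min 1 (‖h‖ ^ 2) = 1 := by
          apply min_eq_left
          calc (1:ℝ) = 1 ^ 2 := (one_pow 2).symm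
            _ ≤ ‖h‖ ^ 2 := by
                apply pow_le_pow_left₀ zero_le_one hh.le
        rw [hmin, mul_one]
        calc |φ h + φ (-h)| ≤ |φ h| + |φ (-h)| := abs_add_le _ _
          _ ≤ Cb + Cb := add_le_add (hφle h) (hφle (-h))
          _ = 2 * Cb := by ring
          _ ≤ C := le_max_right _ _
    calc |G h| = α h * μ h * |φ h + φ (-h)| := by
          rw [hGh, abs_mul, abs_of_nonneg hαμ]
      _ ≤ α h * μ h * (C * min 1 (‖h‖ ^ 2)) :=
          mul_le_mul_of_nonneg_left hkey hαμ
      _ = C * W h := by rw [hWdef]; ring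
  have hWmeas : Measurable W := by
    apply Measurable.mul _ hμmeas
    apply Measurable.mul _ hαmeas
    exact measurable_const.min (measurable_norm.pow measurable_const)
  have hWnonneg : ∀ h, 0 ≤ W h := fun h =>
    mul_nonneg (mul_nonneg (le_min zero_le_one (sq_nonneg _)) (hαnonneg h)) (hμnonneg h)
  have hWint : Integrable W := by
    refine ⟨hWmeas.aestronglyMeasurable, ?_⟩
    rw [hasFiniteIntegral_iff_ofReal (Eventually.of_forall hWnonneg)]
    exact hlevy
  have hφmeas : Measurable φ := hφcont.measurable
  have hgmeas : Measurable g := (hαmeas.mul hφmeas).mul hμmeas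
  have hGmeas : Measurable G := hgmeas.add (hgmeas.comp measurable_neg)
  have hGint : Integrable G := by
    apply (hWint.const_mul C).mono' hGmeas.aestronglyMeasurable
    exact Eventually.of_forall fun h => by
      rw [Real.norm_eq_abs]; exact hGbound h
  have hSmeas : ∀ ε : ℝ, MeasurableSet {h : (EuclideanSpace ℝ (Fin d)) | ε < ‖h‖} := fun ε =>
    measurableSet_lt measurable_const measurable_norm
  -- integrability of products on the truncated region
  have hgInt : ∀ ε : ℝ, 0 < ε → ∀ ψ : (EuclideanSpace ℝ (Fin d)) → ℝ, Measurable ψ → (∀ h, |ψ h| ≤ Cb) →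
      IntegrableOn (fun h => α h * ψ h * μ h) {h : (EuclideanSpace ℝ (Fin d)) | ε < ‖h‖} := by
    intro ε hε ψ hψmeas hψle
    set m : ℝ := min 1 (ε ^ 2) with hmdef
    have hm : (0:ℝ) < m := lt_min one_pos (by positivity)
    apply Integrable.mono' ((hWint.const_mul (Cb * m⁻¹)).restrict)
      (((hαmeas.mul hψmeas).mul hμmeas).aestronglyMeasurable)
    rw [ae_restrict_iff' (hSmeas ε)]
    apply Eventually.of_forall
    intro h hh
    have hmin : m ≤ min 1 (‖h‖ ^ 2) := by
      apply le_min (min_le_left _ _)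
      apply le_trans (min_le_right _ _)
      apply pow_le_pow_left₀ hε.le (le_of_lt hh)
    have e1 : ‖α h * ψ h * μ h‖ ≤ Cb * (α h * μ h) := by
      rw [Real.norm_eq_abs, abs_mul, abs_mul, abs_of_nonneg (hαnonneg h),
        abs_of_nonneg (hμnonneg h)]
      nlinarith [mul_nonneg (mul_nonneg (sub_nonneg.2 (hψle h)) (hαnonneg h)) (hμnonneg h),
        hαnonneg h, hμnonneg h, abs_nonneg (ψ h)]
    have e2 : α h * μ h ≤ m⁻¹ * W h := by
      have e3 : m * (α h * μ h) ≤ W h := by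
        rw [hWdef]
        have := mul_le_mul_of_nonneg_right hmin
          (mul_nonneg (hαnonneg h) (hμnonneg h))
        calc m * (α h * μ h) ≤ min 1 (‖h‖ ^ 2) * (α h * μ h) := this
          _ = min 1 (‖h‖ ^ 2) * α h * μ h := by ring
      calc α h * μ h = m⁻¹ * (m * (α h * μ h)) := by
            field_simp
        _ ≤ m⁻¹ * W h := mul_le_mul_of_nonneg_left e3 (inv_nonneg.2 hm.le)
    calc ‖α h * ψ h * μ h‖ ≤ Cb * (α h * μ h) := e1
      _ ≤ Cb * (m⁻¹ * W h) := mul_le_mul_of_nonneg_left e2 hCbnonneg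
      _ = Cb * m⁻¹ * W h := by ring
  -- neg substitution
  have hnegInt : ∀ (ε : ℝ) (f : (EuclideanSpace ℝ (Fin d)) → ℝ),
      ∫ h in {h : (EuclideanSpace ℝ (Fin d)) | ε < ‖h‖}, f (-h) = ∫ h in {h : (EuclideanSpace ℝ (Fin d)) | ε < ‖h‖}, f h := by
    intro ε f
    have hmp : MeasurePreserving (fun h : (EuclideanSpace ℝ (Fin d)) => -h) volume volume :=
      Measure.measurePreserving_neg volume
    have hemb : MeasurableEmbedding (fun h : (EuclideanSpace ℝ (Fin d)) => -h) :=
      (Homeomorph.neg (EuclideanSpace ℝ (Fin d))).measurableEmbedding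
    have := hmp.setIntegral_preimage_emb hemb f {h : (EuclideanSpace ℝ (Fin d)) | ε < ‖h‖}
    have hpre : (fun h : (EuclideanSpace ℝ (Fin d)) => -h) ⁻¹' {h : (EuclideanSpace ℝ (Fin d)) | ε < ‖h‖} = {h : (EuclideanSpace ℝ (Fin d)) | ε < ‖h‖} := by
      ext h; simp [Set.mem_preimage]
    rw [hpre] at this
    exact this
  -- translation
  have htrans : ∀ ε : ℝ, (∫ y in {y : (EuclideanSpace ℝ (Fin d)) | ε < ‖y - x‖}, fα x y * μ (y - x)) =
      ∫ h in {h : (EuclideanSpace ℝ (Fin d)) | ε < ‖h‖}, g h := by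
    intro ε
    have hmp : MeasurePreserving (fun h : (EuclideanSpace ℝ (Fin d)) => x + h) volume volume :=
      measurePreserving_add_left volume x
    have hemb : MeasurableEmbedding (fun h : (EuclideanSpace ℝ (Fin d)) => x + h) :=
      (Homeomorph.addLeft x).measurableEmbedding
    have := hmp.setIntegral_preimage_emb hemb
      (fun y => fα x y * μ (y - x)) {y : (EuclideanSpace ℝ (Fin d)) | ε < ‖y - x‖}
    have hpre : (fun h : (EuclideanSpace ℝ (Fin d)) => x + h) ⁻¹' {y : (EuclideanSpace ℝ (Fin d)) | ε < ‖y - x‖} = {h : (EuclideanSpace ℝ (Fin d)) | ε < ‖h‖} := by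
      ext h
      simp [Set.mem_preimage, add_sub_cancel_left]
    rw [hpre] at this
    rw [← this]
    apply setIntegral_congr_fun (hSmeas ε)
    intro h _
    exact hg_eq h
  -- dominated convergence for the symmetrized integrand
  have hDCT : Tendsto (fun ε : ℝ => ∫ h, Set.indicator {h : (EuclideanSpace ℝ (Fin d)) | ε < ‖h‖} G h)
      (nhdsWithin 0 (Set.Ioi 0))
      (nhds (∫ h, Set.indicator {h : (EuclideanSpace ℝ (Fin d)) | 0 < ‖h‖} G h)) := by
    apply tendsto_integral_filter_of_dominated_convergence (fun h => C * W h)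
    · exact Eventually.of_forall fun ε =>
        (hGmeas.indicator (hSmeas ε)).aestronglyMeasurable
    · apply Eventually.of_forall
      intro ε
      apply Eventually.of_forall
      intro h
      refine (norm_indicator_le_norm_self _ _).trans ?_
      rw [Real.norm_eq_abs]
      exact hGbound h
    · exact hWint.const_mul C
    · apply Eventually.of_forall
      intro h
      rcases lt_or_ge 0 ‖h‖ with hh | hh
      · have hev : ∀ᶠ ε in nhdsWithin (0:ℝ) (Set.Ioi 0), ε < ‖h‖ :=
          Filter.Eventually.filter_mono nhdsWithin_le_nhds (eventually_lt_nhds hh)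
        have hmem : h ∈ {h' : (EuclideanSpace ℝ (Fin d)) | 0 < ‖h'‖} := hh
        have h2 : Set.indicator {h' : (EuclideanSpace ℝ (Fin d)) | 0 < ‖h'‖} G h = G h :=
          Set.indicator_of_mem hmem G
        rw [h2]
        apply Tendsto.congr' _ (tendsto_const_nhds (α := ℝ) (x := G h))
        filter_upwards [hev] with ε hε
        have hmem' : h ∈ {h' : (EuclideanSpace ℝ (Fin d)) | ε < ‖h'‖} := hε
        exact (Set.indicator_of_mem hmem' G).symm
      · have hh0 : ‖h‖ = 0 := le_antisymm hh (norm_nonneg _)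
        have hnm : h ∉ {h' : (EuclideanSpace ℝ (Fin d)) | 0 < ‖h'‖} := by
          intro hc
          exact absurd hh0 (ne_of_gt hc)
        have h2 : Set.indicator {h' : (EuclideanSpace ℝ (Fin d)) | 0 < ‖h'‖} G h = 0 :=
          Set.indicator_of_notMem hnm G
        rw [h2]
        apply Tendsto.congr' _ (tendsto_const_nhds (α := ℝ) (x := (0:ℝ)))
        filter_upwards [self_mem_nhdsWithin] with ε hε
        have hnm' : h ∉ {h' : (EuclideanSpace ℝ (Fin d)) | ε < ‖h'‖} := by
          simp only [Set.mem_setOf_eq, hh0, not_lt]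
          exact le_of_lt hε
        exact (Set.indicator_of_notMem hnm' G).symm
  simp_rw [integral_indicator (hSmeas _)] at hDCT
  refine ⟨(1/2) * ∫ h in {h : (EuclideanSpace ℝ (Fin d)) | 0 < ‖h‖}, G h, ?_⟩
  have hDCT2 : Tendsto (fun ε : ℝ => (1/2) * ∫ h in {h : (EuclideanSpace ℝ (Fin d)) | ε < ‖h‖}, G h)
      (nhdsWithin 0 (Set.Ioi 0))
      (nhds ((1/2) * ∫ h in {h : (EuclideanSpace ℝ (Fin d)) | 0 < ‖h‖}, G h)) :=
    hDCT.const_mul _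
  apply Tendsto.congr' _ hDCT2
  filter_upwards [self_mem_nhdsWithin] with ε hε
  have hε : (0:ℝ) < ε := hε
  -- integrability of g and g ∘ neg on the region
  have hInt1 : IntegrableOn g {h : (EuclideanSpace ℝ (Fin d)) | ε < ‖h‖} :=
    hgInt ε hε φ hφmeas hφle
  have hInt2 : IntegrableOn (fun h => g (-h)) {h : (EuclideanSpace ℝ (Fin d)) | ε < ‖h‖} := by
    have heq : (fun h : (EuclideanSpace ℝ (Fin d)) => g (-h)) = fun h => α h * φ (-h) * μ h := by
      funext h
      rw [hgdef]
      simp only [hαeven, hμeven]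
    rw [heq]
    exact hgInt ε hε (fun h => φ (-h)) (hφmeas.comp measurable_neg)
      (fun h => hφle (-h))
  have hsplit : ∫ h in {h : (EuclideanSpace ℝ (Fin d)) | ε < ‖h‖}, G h =
      2 * ∫ h in {h : (EuclideanSpace ℝ (Fin d)) | ε < ‖h‖}, g h := by
    rw [hGdef]
    rw [integral_add hInt1 hInt2]
    rw [hnegInt ε g]
    ring
  rw [htrans ε, hsplit]
  ring
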